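/- Over the field F_3 with three elements, there exists a K-subspace C ≤ U^4(F_3) with dim(C) = 4 such that every nonzero Δ ∈ C satisfies frk(Δ) ≥ 5; in fact the span of the four matrices with rows (1,0,1,1),(0,1,0,0),(0,0,1,1),(0,0,0,0); (0,2,1,0),(0,2,2,0),(0,0,1,0),(0,0,0,1); (0,0,1,0),(0,0,0,1),(0,0,0,0),(0,0,0,0); and (0,0,0,1),(0,0,2,0),(0,0,0,0),(0,0,0,0) is such a subspace. -/

import Mathlib

section Helpers

lemma rank_submatrix_le' {K : Type*} [Field K] {m n m' n' : ℕ}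
    (A : Matrix (Fin m) (Fin n) K) (f : Fin m' → Fin m) (g : Fin n' → Fin n) :
    (A.submatrix f g).rank ≤ A.rank := by
  have h1 : A.submatrix f g =
      ((1 : Matrix (Fin m) (Fin m) K).submatrix f (Equiv.refl (Fin m))) * A
        * ((1 : Matrix (Fin n) (Fin n) K).submatrix (Equiv.refl (Fin n)) g) := by
    rw [Matrix.mul_submatrix_one, Matrix.one_submatrix_mul]
    simp
  rw [h1]
  exact le_trans (Matrix.rank_mul_le_left _ _) (Matrix.rank_mul_le_right _ _)

lemma one_le_rank_of_ne {K : Type*} [Field K] {m n : ℕ} (A : Matrix (Fin m) (Fin n) K)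
    (i : Fin m) (j : Fin n) (h : A i j ≠ 0) : 1 ≤ A.rank := by
  have h2 : (A.submatrix ![i] ![j]).rank = 1 := by
    rw [Matrix.rank_of_isUnit, Fintype.card_fin]
    rw [Matrix.isUnit_iff_isUnit_det, Matrix.det_fin_one]
    simpa using h.isUnit
  exact h2 ▸ rank_submatrix_le' A ![i] ![j]

lemma two_le_rank_of_minor {K : Type*} [Field K] {m n : ℕ} (A : Matrix (Fin m) (Fin n) K)
    (i i' : Fin m) (j j' : Fin n) (h : A i j * A i' j' - A i j' * A i' j ≠ 0) : 2 ≤ A.rank := by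
  have h2 : (A.submatrix ![i, i'] ![j, j']).rank = 2 := by
    rw [Matrix.rank_of_isUnit, Fintype.card_fin]
    rw [Matrix.isUnit_iff_isUnit_det, Matrix.det_fin_two]
    simpa using h.isUnit
  exact h2 ▸ rank_submatrix_le' A ![i, i'] ![j, j']

variable {K : Type*} [Field K]

lemma row4_rank {x0 x1 x2 x3 : K} (h : x0 ≠ 0 ∨ x1 ≠ 0 ∨ x2 ≠ 0 ∨ x3 ≠ 0) :
    1 ≤ (!![x0, x1, x2, x3] : Matrix (Fin 1) (Fin 4) K).rank := by
  rcases h with h | h | h | h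
  · exact one_le_rank_of_ne _ 0 0 (by simpa)
  · exact one_le_rank_of_ne _ 0 1 (by simpa)
  · exact one_le_rank_of_ne _ 0 2 (by simpa)
  · exact one_le_rank_of_ne _ 0 3 (by simpa)

lemma col4_rank {x0 x1 x2 x3 : K} (h : x0 ≠ 0 ∨ x1 ≠ 0 ∨ x2 ≠ 0 ∨ x3 ≠ 0) :
    1 ≤ (!![x0; x1; x2; x3] : Matrix (Fin 4) (Fin 1) K).rank := by
  rcases h with h | h | h | h
  · exact one_le_rank_of_ne _ 0 0 (by simpa)
  · exact one_le_rank_of_ne _ 1 0 (by simpa)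
  · exact one_le_rank_of_ne _ 2 0 (by simpa)
  · exact one_le_rank_of_ne _ 3 0 (by simpa)

lemma m23_rank1 {x00 x01 x02 x10 x11 x12 : K}
    (h : x00 ≠ 0 ∨ x01 ≠ 0 ∨ x02 ≠ 0 ∨ x10 ≠ 0 ∨ x11 ≠ 0 ∨ x12 ≠ 0) :
    1 ≤ (!![x00, x01, x02; x10, x11, x12] : Matrix (Fin 2) (Fin 3) K).rank := by
  rcases h with h | h | h | h | h | h
  · exact one_le_rank_of_ne _ 0 0 (by simpa)
  · exact one_le_rank_of_ne _ 0 1 (by simpa)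
  · exact one_le_rank_of_ne _ 0 2 (by simpa)
  · exact one_le_rank_of_ne _ 1 0 (by simpa)
  · exact one_le_rank_of_ne _ 1 1 (by simpa)
  · exact one_le_rank_of_ne _ 1 2 (by simpa)

lemma m23_rank2 {x00 x01 x02 x10 x11 x12 : K}
    (h : x00 * x11 - x01 * x10 ≠ 0 ∨ x00 * x12 - x02 * x10 ≠ 0 ∨ x01 * x12 - x02 * x11 ≠ 0) :
    2 ≤ (!![x00, x01, x02; x10, x11, x12] : Matrix (Fin 2) (Fin 3) K).rank := by
  rcases h with h | h | h
  · exact two_le_rank_of_minor _ 0 1 0 1 (by simpa)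
  · exact two_le_rank_of_minor _ 0 1 0 2 (by simpa)
  · exact two_le_rank_of_minor _ 0 1 1 2 (by simpa)

lemma m32_rank1 {x00 x01 x10 x11 x20 x21 : K}
    (h : x00 ≠ 0 ∨ x01 ≠ 0 ∨ x10 ≠ 0 ∨ x11 ≠ 0 ∨ x20 ≠ 0 ∨ x21 ≠ 0) :
    1 ≤ (!![x00, x01; x10, x11; x20, x21] : Matrix (Fin 3) (Fin 2) K).rank := by
  rcases h with h | h | h | h | h | h
  · exact one_le_rank_of_ne _ 0 0 (by simpa)
  · exact one_le_rank_of_ne _ 0 1 (by simpa)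
  · exact one_le_rank_of_ne _ 1 0 (by simpa)
  · exact one_le_rank_of_ne _ 1 1 (by simpa)
  · exact one_le_rank_of_ne _ 2 0 (by simpa)
  · exact one_le_rank_of_ne _ 2 1 (by simpa)

lemma m32_rank2 {x00 x01 x10 x11 x20 x21 : K}
    (h : x00 * x11 - x01 * x10 ≠ 0 ∨ x00 * x21 - x01 * x20 ≠ 0 ∨ x10 * x21 - x11 * x20 ≠ 0) :
    2 ≤ (!![x00, x01; x10, x11; x20, x21] : Matrix (Fin 3) (Fin 2) K).rank := by
  rcases h with h | h | h
  · exact two_le_rank_of_minor _ 0 1 0 1 (by simpa)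
  · exact two_le_rank_of_minor _ 0 2 0 1 (by simpa)
  · exact two_le_rank_of_minor _ 1 2 0 1 (by simpa)

end Helpers

set_option synthInstance.maxSize 2000 in
set_option synthInstance.maxHeartbeats 2000000 in
set_option maxHeartbeats 2000000 in
lemma key3 : ∀ a b c d : ZMod 3, ¬(a = 0 ∧ b = 0 ∧ c = 0 ∧ d = 0) →
    (a ≠ 0 ∨ 2*b ≠ 0 ∨ a+b+c ≠ 0 ∨ a+d ≠ 0) ∧
    (a+d ≠ 0 ∨ c ≠ 0 ∨ a ≠ 0 ∨ b ≠ 0) ∧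
    (((2*b)*(2*b+2*d) - (a+b+c)*(a+2*b) ≠ 0 ∨ (2*b)*c - (a+d)*(a+2*b) ≠ 0 ∨
        (a+b+c)*c - (a+d)*(2*b+2*d) ≠ 0) ∧
      (a+b+c ≠ 0 ∨ a+d ≠ 0 ∨ 2*b+2*d ≠ 0 ∨ c ≠ 0 ∨ a+b ≠ 0 ∨ a ≠ 0) ∨
     ((a+b+c)*c - (a+d)*(2*b+2*d) ≠ 0 ∨ (a+b+c)*a - (a+d)*(a+b) ≠ 0 ∨
        (2*b+2*d)*a - c*(a+b) ≠ 0) ∧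
      (2*b ≠ 0 ∨ a+b+c ≠ 0 ∨ a+d ≠ 0 ∨ a+2*b ≠ 0 ∨ 2*b+2*d ≠ 0 ∨ c ≠ 0)) := by
  decide


/-- The space `U^n(K)` of upper triangular `n × n` matrices over `K`,
as a `K`-subspace of the matrix space. -/
def UT (K : Type*) [Field K] (n : ℕ) : Submodule K (Matrix (Fin n) (Fin n) K) where
  carrier := {A | ∀ i j : Fin n, (j : ℕ) < (i : ℕ) → A i j = 0}
  add_mem' := by
    intro a b ha hb i j h
    simp [Matrix.add_apply, ha i j h, hb i j h]
  zero_mem' := by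
    intro i j h
    simp
  smul_mem' := by
    intro c a ha i j h
    simp [Matrix.smul_apply, ha i j h]

/-- For `Δ ∈ U^n(K)` and `i : Fin n` (representing the 1-indexed value `i+1`),
the upper-right corner submatrix `Δ_[i+1] ∈ K^{(i+1) × (n+1-(i+1))}`,
consisting of the entries `Δ_{k,ℓ}` with (1-indexed) `1 ≤ k ≤ i+1`, `i+1 ≤ ℓ ≤ n`. -/
def corner {K : Type*} [Field K] {n : ℕ} (Δ : Matrix (Fin n) (Fin n) K) (i : Fin n) :
    Matrix (Fin ((i : ℕ) + 1)) (Fin (n + 1 - ((i : ℕ) + 1))) K :=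
  Matrix.of fun k l =>
    Δ ⟨k, by have := k.isLt; have := i.isLt; omega⟩
      ⟨(i : ℕ) + l, by have := l.isLt; have := i.isLt; omega⟩

/-- The flag rank of an upper triangular matrix: the sum of the ranks of its
upper-right corner submatrices, `frk Δ = Σ_{i=1}^{n} rank Δ_[i]`. -/
noncomputable def frk {K : Type*} [Field K] {n : ℕ} (Δ : Matrix (Fin n) (Fin n) K) : ℕ :=
  ∑ i : Fin n, (corner Δ i).rank

set_option maxHeartbeats 1600000 in
/-- Over `F_3`, the span of the four given upper triangular `4 × 4` matrices is a
flag rank metric code of dimension `4` in `U^4(F_3)` all of whose nonzero elements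
have flag rank at least `5`. -/
theorem example_code_over_F3
    (C : Submodule (ZMod 3) (Matrix (Fin 4) (Fin 4) (ZMod 3)))
    (hC : C = Submodule.span (ZMod 3)
      {!![1, 0, 1, 1; 0, 1, 0, 0; 0, 0, 1, 1; 0, 0, 0, 0],
        !![0, 2, 1, 0; 0, 2, 2, 0; 0, 0, 1, 0; 0, 0, 0, 1],
        !![0, 0, 1, 0; 0, 0, 0, 1; 0, 0, 0, 0; 0, 0, 0, 0],
        !![0, 0, 0, 1; 0, 0, 2, 0; 0, 0, 0, 0; 0, 0, 0, 0]}) :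
    C ≤ UT (ZMod 3) 4 ∧ Module.finrank (ZMod 3) ↥C = 4 ∧
      ∀ Δ ∈ C, Δ ≠ 0 → 5 ≤ frk Δ := by
  set m1 : Matrix (Fin 4) (Fin 4) (ZMod 3) :=
    !![1, 0, 1, 1; 0, 1, 0, 0; 0, 0, 1, 1; 0, 0, 0, 0] with hm1
  set m2 : Matrix (Fin 4) (Fin 4) (ZMod 3) :=
    !![0, 2, 1, 0; 0, 2, 2, 0; 0, 0, 1, 0; 0, 0, 0, 1] with hm2
  set m3 : Matrix (Fin 4) (Fin 4) (ZMod 3) :=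
    !![0, 0, 1, 0; 0, 0, 0, 1; 0, 0, 0, 0; 0, 0, 0, 0] with hm3
  set m4 : Matrix (Fin 4) (Fin 4) (ZMod 3) :=
    !![0, 0, 0, 1; 0, 0, 2, 0; 0, 0, 0, 0; 0, 0, 0, 0] with hm4
  refine ⟨?_, ?_, ?_⟩
  · -- C ≤ UT
    rw [hC, Submodule.span_le]
    intro x hx
    simp only [Set.mem_insert_iff, Set.mem_singleton_iff] at hx
    rcases hx with rfl | rfl | rfl | rfl <;>
      · show ∀ i j : Fin 4, (j : ℕ) < (i : ℕ) → _ = 0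
        intro i j h
        fin_cases i <;> fin_cases j <;> simp_all
  · -- finrank
    have hrange : Set.range ![m1, m2, m3, m4] = {m1, m2, m3, m4} := by
      ext x
      simp only [Set.mem_range, Set.mem_insert_iff, Set.mem_singleton_iff]
      constructor
      · rintro ⟨i, rfl⟩; fin_cases i <;> simp
      · rintro (rfl | rfl | rfl | rfl)
        exacts [⟨0, rfl⟩, ⟨1, rfl⟩, ⟨2, rfl⟩, ⟨3, rfl⟩]
    have hli : LinearIndependent (ZMod 3) ![m1, m2, m3, m4] := by
      rw [Fintype.linearIndependent_iff]
      intro g hg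
      rw [Fin.sum_univ_four] at hg
      have e00 := congrFun (congrFun hg 0) 0
      have e33 := congrFun (congrFun hg 3) 3
      have e13 := congrFun (congrFun hg 1) 3
      have e03 := congrFun (congrFun hg 0) 3
      simp [hm1, hm2, hm3, hm4, Matrix.add_apply, Matrix.smul_apply,
        Matrix.vecHead, Matrix.vecTail] at e00 e33 e13 e03
      intro i
      fin_cases i
      · simpa using e00
      · simpa using e33
      · simpa using e13
      · simpa [e00] using e03
    rw [hC, ← hrange, finrank_span_eq_card hli, Fintype.card_fin]
  · -- min distance
    intro Δ hΔ hΔne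
    rw [hC] at hΔ
    rw [Submodule.mem_span_insert] at hΔ
    obtain ⟨a, _, hΔ, rfl⟩ := hΔ
    rw [Submodule.mem_span_insert] at hΔ
    obtain ⟨b, _, hΔ, rfl⟩ := hΔ
    rw [Submodule.mem_span_insert] at hΔ
    obtain ⟨c, _, hΔ, rfl⟩ := hΔ
    rw [Submodule.mem_span_singleton] at hΔ
    obtain ⟨d, rfl⟩ := hΔ
    set Δ := a • m1 + (b • m2 + (c • m3 + d • m4)) with hΔdef
    have hD : Δ = !![a, 2*b, a+b+c, a+d; 0, a+2*b, 2*b+2*d, c; 0, 0, a+b, a; 0, 0, 0, b] := by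
      ext i j
      fin_cases i <;> fin_cases j <;>
        simp [hΔdef, hm1, hm2, hm3, hm4, Matrix.add_apply, Matrix.smul_apply, smul_eq_mul,
          Matrix.vecHead, Matrix.vecTail] <;> ring
    have hne : ¬(a = 0 ∧ b = 0 ∧ c = 0 ∧ d = 0) := by
      rintro ⟨rfl, rfl, rfl, rfl⟩
      apply hΔne
      rw [hD]
      ext i j
      fin_cases i <;> fin_cases j <;> simp [Matrix.vecHead, Matrix.vecTail]
    obtain ⟨k0, k3, kmid⟩ := key3 a b c d hne
    have h0 : corner Δ (0 : Fin 4) = !![a, 2*b, a+b+c, a+d] := by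
      ext k l
      fin_cases k <;> fin_cases l <;> simp [corner, hD, Matrix.vecHead, Matrix.vecTail]
    have h1 : corner Δ (1 : Fin 4) = !![2*b, a+b+c, a+d; a+2*b, 2*b+2*d, c] := by
      ext k l
      fin_cases k <;> fin_cases l <;> simp [corner, hD, Matrix.vecHead, Matrix.vecTail]
    have h2 : corner Δ (2 : Fin 4) = !![a+b+c, a+d; 2*b+2*d, c; a+b, a] := by
      ext k l
      fin_cases k <;> fin_cases l <;> simp [corner, hD, Matrix.vecHead, Matrix.vecTail]
    have h3 : corner Δ (3 : Fin 4) = !![a+d; c; a; b] := by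
      ext k l
      fin_cases k <;> fin_cases l <;> simp [corner, hD, Matrix.vecHead, Matrix.vecTail]
    have hfrk : frk Δ = (corner Δ 0).rank + (corner Δ 1).rank
        + (corner Δ 2).rank + (corner Δ 3).rank := by
      rw [frk, Fin.sum_univ_four]
    rw [hfrk, h0, h1, h2, h3]
    have r0 := row4_rank k0
    have r3 := col4_rank k3
    rcases kmid with ⟨km1, km2⟩ | ⟨km2, km1⟩
    · have r1 := m23_rank2 km1
      have r2 := m32_rank1 km2
      omega
    · have r1 := m23_rank1 km1
      have r2 := m32_rank2 km2
      omega
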